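/- Let G be an operator on H_A ⊗ H_C ⊗ H_B and let P_j, P_k be rank-one orthogonal projections onto distinct orthonormal basis vectors of H_C. Setting a-type and b-type matrix elements as in the proof, the real part of tr(G(I⊗P_j⊗I)G*) + tr(G(I⊗P_k⊗I)G*) − 2 tr((I⊗P_{jk}⊗I)G(I⊗P_{kj}⊗I)G*) is nonnegative, where P_{jk} = |φ_j⟩⟨φ_k|. More precisely, it is bounded below by tr{(I⊗(I−P_j)⊗I) G (I⊗P_j⊗I) G* (I⊗(I−P_j)⊗I)} + the same expression with j and k exchanged. -/

import Mathlib

open Matrix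
set_option linter.unusedSectionVars false

lemma aux_trace_re_nonneg {n : Type*} [Fintype n] (M : Matrix n n ℂ) :
    0 ≤ (trace (M * Mᴴ)).re := by
  rw [trace]
  simp only [diag_apply, mul_apply, conjTranspose_apply]
  rw [Complex.re_sum]
  refine Finset.sum_nonneg fun i _ => ?_
  rw [Complex.re_sum]
  refine Finset.sum_nonneg fun l _ => ?_
  rw [show star (M i l) = (starRingEnd ℂ) (M i l) from rfl, Complex.mul_conj]
  simp [Complex.normSq_nonneg]

lemma aux_vecMulVec_mul {n : Type*} [Fintype n] (x y z w : n → ℂ) :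
    vecMulVec x y * vecMulVec z w = (y ⬝ᵥ z) • vecMulVec x w := by
  ext p q
  simp [mul_apply, vecMulVec_apply, dotProduct, Finset.sum_mul, Finset.mul_sum]
  apply Finset.sum_congr rfl
  intros; ring

lemma aux_vecMulVec_conjT {n : Type*} (x y : n → ℂ) :
    (vecMulVec x (star y))ᴴ = vecMulVec y (star x) := by
  ext p q
  simp [vecMulVec_apply, conjTranspose_apply, mul_comm]

section
variable {A C B : Type*} [Fintype A] [Fintype B] [Fintype C]
    [DecidableEq A] [DecidableEq B] [DecidableEq C]
    (E : Matrix C C ℂ → Matrix (A × C × B) (A × C × B) ℂ)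
    (hE : ∀ M, E M = Matrix.of fun p q =>
        (if p.1 = q.1 then (1 : ℂ) else 0) * M p.2.1 q.2.1
          * (if p.2.2 = q.2.2 then (1 : ℂ) else 0))

include hE

lemma aux_E_mul (M N : Matrix C C ℂ) : E M * E N = E (M * N) := by
  ext ⟨a, c, b⟩ ⟨a', c', b'⟩
  simp only [hE, mul_apply, of_apply, Fintype.sum_prod_type]
  simp [ite_mul, mul_ite, Finset.sum_ite_eq, Finset.sum_ite_eq', Finset.mul_sum]

lemma aux_E_one : E (1 : Matrix C C ℂ) = 1 := by
  ext ⟨a, c, b⟩ ⟨a', c', b'⟩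
  simp only [hE, of_apply, one_apply, Prod.mk.injEq]
  by_cases h1 : a = a' <;> by_cases h2 : c = c' <;> by_cases h3 : b = b' <;> simp [h1, h2, h3]

lemma aux_E_sub (M N : Matrix C C ℂ) : E (M - N) = E M - E N := by
  ext p q
  simp [hE]
  split_ifs <;> simp

lemma aux_E_smul (r : ℂ) (M : Matrix C C ℂ) : E (r • M) = r • E M := by
  ext p q
  simp [hE]

lemma aux_E_conjT (M : Matrix C C ℂ) : (E M)ᴴ = E Mᴴ := by
  ext p q
  simp only [hE, conjTranspose_apply, of_apply, star_mul']
  split_ifs with h1 h2 h3 h4 <;> simp_all [eq_comm]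

end

theorem stmt18 {A C B : Type*} [Fintype A] [Fintype B] [Fintype C]
    [DecidableEq A] [DecidableEq B] [DecidableEq C]
    (φ : C → C → ℂ)
    (hortho : ∀ l m, (∑ i, star (φ l i) * φ m i) = if l = m then 1 else 0)
    (j k : C) (hjk : j ≠ k)
    (G : Matrix (A × C × B) (A × C × B) ℂ)
    (E : Matrix C C ℂ → Matrix (A × C × B) (A × C × B) ℂ)
    (hE : ∀ M, E M = Matrix.of fun p q =>
        (if p.1 = q.1 then (1 : ℂ) else 0) * M p.2.1 q.2.1
          * (if p.2.2 = q.2.2 then (1 : ℂ) else 0)) :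
    ((G * E (vecMulVec (φ j) (star (φ j))) * Gᴴ).trace
        + (G * E (vecMulVec (φ k) (star (φ k))) * Gᴴ).trace
        - 2 * (E (vecMulVec (φ j) (star (φ k))) * G
                * E (vecMulVec (φ k) (star (φ j))) * Gᴴ).trace).re
      ≥ ((E (1 - vecMulVec (φ j) (star (φ j))) * G * E (vecMulVec (φ j) (star (φ j))) * Gᴴ
            * E (1 - vecMulVec (φ j) (star (φ j)))).trace
        + (E (1 - vecMulVec (φ k) (star (φ k))) * G * E (vecMulVec (φ k) (star (φ k))) * Gᴴ
            * E (1 - vecMulVec (φ k) (star (φ k)))).trace).re := by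
  -- dot product facts
  have hdot : ∀ l m, star (φ l) ⬝ᵥ φ m = if l = m then (1 : ℂ) else 0 := by
    intro l m
    simpa [dotProduct] using hortho l m
  set Pj := E (vecMulVec (φ j) (star (φ j))) with hPjdef
  set Pk := E (vecMulVec (φ k) (star (φ k))) with hPkdef
  set Pjk := E (vecMulVec (φ j) (star (φ k))) with hPjkdef
  set Pkj := E (vecMulVec (φ k) (star (φ j))) with hPkjdef
  set Qj := E (1 - vecMulVec (φ j) (star (φ j))) with hQjdef
  set Qk := E (1 - vecMulVec (φ k) (star (φ k))) with hQkdef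
  -- product rules
  have Emul := aux_E_mul E hE
  have prod : ∀ (l m l' m' : C), E (vecMulVec (φ l) (star (φ m))) * E (vecMulVec (φ l') (star (φ m')))
      = (if m = l' then (1:ℂ) else 0) • E (vecMulVec (φ l) (star (φ m'))) := by
    intro l m l' m'
    rw [Emul, aux_vecMulVec_mul, hdot, aux_E_smul E hE]
  have hPjPj : Pj * Pj = Pj := by rw [hPjdef, prod]; simp
  have hPkPk : Pk * Pk = Pk := by rw [hPkdef, prod]; simp
  have hPjkPkj : Pjk * Pkj = Pj := by rw [hPjkdef, hPkjdef, prod]; simp [hPjdef]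
  have hPkjPjk : Pkj * Pjk = Pk := by rw [hPkjdef, hPjkdef, prod]; simp [hPkdef]
  have hPjPjk : Pj * Pjk = Pjk := by rw [hPjdef, hPjkdef, prod]; simp
  have hPkjPj : Pkj * Pj = Pkj := by rw [hPkjdef, hPjdef, prod]; simp
  -- adjoints
  have hPjH : Pjᴴ = Pj := by rw [hPjdef, aux_E_conjT E hE, aux_vecMulVec_conjT]
  have hPkH : Pkᴴ = Pk := by rw [hPkdef, aux_E_conjT E hE, aux_vecMulVec_conjT]
  have hPjkH : Pjkᴴ = Pkj := by rw [hPjkdef, aux_E_conjT E hE, aux_vecMulVec_conjT]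
  have hPkjH : Pkjᴴ = Pjk := by rw [hPkjdef, aux_E_conjT E hE, aux_vecMulVec_conjT]
  -- collapsing lemmas (right-assoc)
  have cPjPj : ∀ Z, Pj * (Pj * Z) = Pj * Z := fun Z => by rw [← Matrix.mul_assoc, hPjPj]
  have cPkjPjk : ∀ Z, Pkj * (Pjk * Z) = Pk * Z := fun Z => by rw [← Matrix.mul_assoc, hPkjPjk]
  have cPkjPj : ∀ Z, Pkj * (Pj * Z) = Pkj * Z := fun Z => by rw [← Matrix.mul_assoc, hPkjPj]
  set X := Pj * G * Pj with hX
  set Y := Pjk * G * Pkj with hY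
  -- trace identities
  have t1 : (X * Xᴴ).trace = (Pj * G * Pj * Gᴴ).trace := by
    have e1 : X * Xᴴ = (Pj * G * Pj * Gᴴ) * Pj := by
      simp only [hX, conjTranspose_mul, hPjH, Matrix.mul_assoc, cPjPj]
    rw [e1, trace_mul_comm]
    congr 1
    simp only [← Matrix.mul_assoc]
    rw [hPjPj]
  have t2 : (Y * Yᴴ).trace = (Pk * G * Pk * Gᴴ).trace := by
    have e2 : Y * Yᴴ = (Pjk * G * Pk * Gᴴ) * Pkj := by
      simp only [hY, conjTranspose_mul, hPjkH, hPkjH, Matrix.mul_assoc, cPkjPjk]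
    rw [e2, trace_mul_comm]
    congr 1
    simp only [← Matrix.mul_assoc]
    rw [hPkjPjk]
  have t3 : (Y * Xᴴ).trace = (Pjk * G * Pkj * Gᴴ).trace := by
    have e3 : Y * Xᴴ = (Pjk * G * Pkj * Gᴴ) * Pj := by
      simp only [hX, hY, conjTranspose_mul, hPjH, Matrix.mul_assoc, cPkjPj]
    rw [e3, trace_mul_comm]
    congr 1
    simp only [← Matrix.mul_assoc]
    rw [hPjPjk]
  have t4 : (X * Yᴴ).trace = star ((Pjk * G * Pkj * Gᴴ).trace) := by
    have e4 : (Y * Xᴴ)ᴴ = X * Yᴴ := by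
      rw [conjTranspose_mul, conjTranspose_conjTranspose]
    rw [← e4, trace_conjTranspose, t3]
  -- key positivity
  have key := aux_trace_re_nonneg (X - Y)
  rw [conjTranspose_sub] at key
  simp only [Matrix.sub_mul, Matrix.mul_sub, trace_sub] at key
  rw [t1, t2, t3, t4] at key
  -- Q-side traces
  have hQj : Qj = 1 - Pj := by rw [hQjdef, aux_E_sub E hE, aux_E_one E hE]
  have hQk : Qk = 1 - Pk := by rw [hQkdef, aux_E_sub E hE, aux_E_one E hE]
  have qside : ∀ (P Q : Matrix (A × C × B) (A × C × B) ℂ), Q = 1 - P → P * P = P →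
      (Q * G * P * Gᴴ * Q).trace = (G * P * Gᴴ).trace - (P * G * P * Gᴴ).trace := by
    intro P Q hQ hP
    rw [trace_mul_comm]
    have : Q * (Q * G * P * Gᴴ) = Q * G * P * Gᴴ := by
      simp only [← Matrix.mul_assoc]
      congr 2
      rw [hQ]
      simp only [Matrix.sub_mul, Matrix.mul_sub, Matrix.one_mul, Matrix.mul_one, hP]
      abel
    rw [this, hQ]
    simp only [Matrix.sub_mul, Matrix.one_mul, trace_sub]
  rw [qside Pj Qj hQj hPjPj, qside Pk Qk hQk hPkPk]
  -- final arithmetic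
  simp only [Complex.add_re, Complex.sub_re, Complex.mul_re, Complex.conj_re] at *
  simp only [Complex.star_def, Complex.conj_re] at key
  norm_num at *
  linarith
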